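/- Let ℵ : [0,∞) → ℝ be C² with bounded first and second derivatives and ℵ(0) > 0. Let s_ζ denote the unique positive zero of ℵ(s) − ζ s for large ζ. Then s_ζ = ℵ(0)/(ζ − ℵ'(0)) + O(1/ζ³) as ζ → ∞. -/

import Mathlib

open Filter Asymptotics

/-- If `ℵ` is `C²` on `[0,∞)` with bounded first and second derivatives and
`ℵ(0) > 0`, and `z ζ` denotes the unique positive zero of `ℵ(s) - ζ s` for large
`ζ`, then `z ζ = ℵ(0)/(ζ - ℵ'(0)) + O(1/ζ³)` as `ζ → ∞`. -/
theorem stmt_6 (aleph aleph' aleph'' : ℝ → ℝ) (M ζ₀ : ℝ) (z : ℝ → ℝ)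
    (hderiv1 : ∀ s ∈ Set.Ici (0:ℝ), HasDerivWithinAt aleph (aleph' s) (Set.Ici 0) s)
    (hderiv2 : ∀ s ∈ Set.Ici (0:ℝ), HasDerivWithinAt aleph' (aleph'' s) (Set.Ici 0) s)
    (hcont : ContinuousOn aleph'' (Set.Ici 0))
    (hb0 : ∀ s ∈ Set.Ici (0:ℝ), |aleph s| ≤ M)
    (hb1 : ∀ s ∈ Set.Ici (0:ℝ), |aleph' s| ≤ M)
    (hb2 : ∀ s ∈ Set.Ici (0:ℝ), |aleph'' s| ≤ M)
    (hpos : 0 < aleph 0)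
    (hζ₀ : M < ζ₀)
    (hz : ∀ ζ ≥ ζ₀, 0 < z ζ ∧ aleph (z ζ) = ζ * z ζ) :
    (fun ζ => z ζ - aleph 0 / (ζ - aleph' 0)) =O[atTop] fun ζ => 1 / ζ ^ 3 := by
  have hM0 : 0 < M := lt_of_lt_of_le hpos (le_trans (le_abs_self _) (hb0 0 (Set.mem_Ici.2 le_rfl)))
  rw [Asymptotics.isBigO_iff]
  refine ⟨2 * M ^ 3, ?_⟩
  filter_upwards [Filter.eventually_ge_atTop (max ζ₀ (2 * M))] with ζ hζ
  have hζ1 : ζ₀ ≤ ζ := le_trans (le_max_left _ _) hζ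
  have hζ2 : 2 * M ≤ ζ := le_trans (le_max_right _ _) hζ
  have hζpos : 0 < ζ := lt_of_lt_of_le (by linarith) hζ2
  obtain ⟨hzpos, hzeq⟩ := hz ζ hζ1
  set s := z ζ with hs
  have hsM : s ≤ M / ζ := by
    rw [le_div_iff₀ hζpos]
    calc s * ζ = ζ * s := mul_comm _ _
    _ = aleph s := hzeq.symm
    _ ≤ M := le_trans (le_abs_self _) (hb0 s hzpos.le)
  have hsub : Set.Icc (0:ℝ) s ⊆ Set.Ici 0 := fun x hx => hx.1
  have h0mem : (0:ℝ) ∈ Set.Icc (0:ℝ) s := Set.left_mem_Icc.2 hzpos.le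
  have hsmem : s ∈ Set.Icc (0:ℝ) s := Set.right_mem_Icc.2 hzpos.le
  -- step 1 : |aleph' x - aleph' 0| ≤ M * s on [0,s]
  have h1 : ∀ x ∈ Set.Icc (0:ℝ) s, ‖aleph' x - aleph' 0‖ ≤ M * s := by
    intro x hx
    have := (convex_Icc (0:ℝ) s).norm_image_sub_le_of_norm_hasDerivWithin_le
      (f' := fun y => aleph'' y)
      (fun y hy => (hderiv2 y (hsub hy)).mono hsub)
      (fun y hy => hb2 y (hsub hy)) h0mem hx
    calc ‖aleph' x - aleph' 0‖ ≤ M * ‖x - 0‖ := this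
    _ ≤ M * s := by
        rw [sub_zero, Real.norm_eq_abs, abs_of_nonneg hx.1]
        exact mul_le_mul_of_nonneg_left hx.2 hM0.le
  -- step 2 : Taylor bound
  have h2 : |aleph s - aleph' 0 * s - aleph 0| ≤ M * s ^ 2 := by
    have hg : ∀ x ∈ Set.Icc (0:ℝ) s,
        HasDerivWithinAt (fun y => aleph y - aleph' 0 * y) (aleph' x - aleph' 0)
          (Set.Icc 0 s) x := by
      intro x hx
      have h := ((hderiv1 x (hsub hx)).mono hsub).sub
        ((hasDerivWithinAt_id x (Set.Icc (0:ℝ) s)).const_mul (aleph' 0))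
      rw [mul_one] at h
      exact h
    have := (convex_Icc (0:ℝ) s).norm_image_sub_le_of_norm_hasDerivWithin_le
      hg h1 h0mem hsmem
    have h3 : |aleph s - aleph' 0 * s - (aleph 0 - aleph' 0 * 0)| ≤ M * s * s := by
      rw [Real.norm_eq_abs, Real.norm_eq_abs, sub_zero, abs_of_nonneg hzpos.le] at this
      exact this
    calc |aleph s - aleph' 0 * s - aleph 0| = |aleph s - aleph' 0 * s - (aleph 0 - aleph' 0 * 0)| := by rw [mul_zero, sub_zero]
    _ ≤ M * s * s := h3
    _ = M * s ^ 2 := by ring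
  have hA' : |aleph' 0| ≤ M := hb1 0 (Set.mem_Ici.2 le_rfl)
  have hA'le : aleph' 0 ≤ M := (abs_le.1 hA').2
  have hden : ζ / 2 ≤ ζ - aleph' 0 := by linarith
  have hdenpos : 0 < ζ - aleph' 0 := by linarith
  have key : s - aleph 0 / (ζ - aleph' 0)
      = (aleph s - aleph' 0 * s - aleph 0) / (ζ - aleph' 0) := by
    rw [hzeq]
    field_simp
  rw [key, Real.norm_eq_abs, Real.norm_eq_abs, abs_div, abs_of_pos hdenpos]
  have hnum : |aleph s - aleph' 0 * s - aleph 0| ≤ M * (M / ζ) ^ 2 := by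
    refine h2.trans ?_
    have : s ^ 2 ≤ (M / ζ) ^ 2 := by
      apply pow_le_pow_left₀ hzpos.le hsM
    nlinarith
  have hstep : |aleph s - aleph' 0 * s - aleph 0| / (ζ - aleph' 0)
      ≤ (M * (M / ζ) ^ 2) / (ζ / 2) :=
    div_le_div₀ (by positivity) hnum (by linarith) hden
  refine hstep.trans (le_of_eq ?_)
  rw [abs_of_pos (by positivity : (0:ℝ) < 1 / ζ ^ 3)]
  field_simp
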